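/- For every α ∈ ℝ and every ε ∈ {−1, 1}, the map F_ε : ℝ² → ℝ² defined by F_ε(u₁, u₂) = (u₁ − ε·cos α·√(1 + u₁² + u₂²), u₂ − ε·sin α·√(1 + u₁² + u₂²)) is a bijection from ℝ² onto the open half-plane {(x₁, x₂) ∈ ℝ² : ε·(x₁ cos α + x₂ sin α) < 0}. -/

import Mathlib

lemma aux_bij (c s ε : ℝ) (hcs : c ^ 2 + s ^ 2 = 1) (hε2 : ε ^ 2 = 1) :
    Set.BijOn (fun u : ℝ × ℝ =>
      (u.1 - ε * c * Real.sqrt (1 + u.1 ^ 2 + u.2 ^ 2),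
       u.2 - ε * s * Real.sqrt (1 + u.1 ^ 2 + u.2 ^ 2))) Set.univ
      {x : ℝ × ℝ | ε * (x.1 * c + x.2 * s) < 0} := by
  have sqrt_sq : ∀ u : ℝ × ℝ, (Real.sqrt (1 + u.1 ^ 2 + u.2 ^ 2)) ^ 2 = 1 + u.1 ^ 2 + u.2 ^ 2 :=
    fun u => Real.sq_sqrt (by positivity)
  have sqrt_pos : ∀ u : ℝ × ℝ, 0 < Real.sqrt (1 + u.1 ^ 2 + u.2 ^ 2) :=
    fun u => Real.sqrt_pos.mpr (by positivity)
  have key : ∀ u : ℝ × ℝ,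
      ε * ((u.1 - ε * c * Real.sqrt (1 + u.1 ^ 2 + u.2 ^ 2)) * c +
           (u.2 - ε * s * Real.sqrt (1 + u.1 ^ 2 + u.2 ^ 2)) * s) < 0 := by
    intro u
    set r := Real.sqrt (1 + u.1 ^ 2 + u.2 ^ 2) with hrdef
    have h2 := sqrt_sq u; rw [← hrdef] at h2
    have h3 := sqrt_pos u; rw [← hrdef] at h3
    have hcauchy : (u.1 * c + u.2 * s) ^ 2 ≤ u.1 ^ 2 + u.2 ^ 2 := by
      nlinarith [sq_nonneg (u.1 * s - u.2 * c)]
    have hq2 : (ε * (u.1 * c + u.2 * s)) ^ 2 = (u.1 * c + u.2 * s) ^ 2 := by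
      rw [mul_pow, hε2, one_mul]
    have hgoal : ε * ((u.1 - ε * c * r) * c + (u.2 - ε * s * r) * s)
        = ε * (u.1 * c + u.2 * s) - r := by
      linear_combination (-r * (c ^ 2 + s ^ 2)) * hε2 - r * hcs
    rw [hgoal]
    nlinarith [hq2, hcauchy, h2, h3]
  refine ⟨fun u _ => key u, ?_, ?_⟩
  · -- InjOn
    intro u _ v _ h
    have e1 : u.1 - ε * c * Real.sqrt (1 + u.1 ^ 2 + u.2 ^ 2)
            = v.1 - ε * c * Real.sqrt (1 + v.1 ^ 2 + v.2 ^ 2) := congrArg Prod.fst h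
    have e2 : u.2 - ε * s * Real.sqrt (1 + u.1 ^ 2 + u.2 ^ 2)
            = v.2 - ε * s * Real.sqrt (1 + v.1 ^ 2 + v.2 ^ 2) := congrArg Prod.snd h
    set ru := Real.sqrt (1 + u.1 ^ 2 + u.2 ^ 2) with hru
    set rv := Real.sqrt (1 + v.1 ^ 2 + v.2 ^ 2) with hrv
    have h2u := sqrt_sq u; rw [← hru] at h2u
    have h2v := sqrt_sq v; rw [← hrv] at h2v
    set p := (u.1 - ε * c * ru) * c + (u.2 - ε * s * ru) * s with hp
    have hpu : 2 * ε * ru * p + (1 + (u.1 - ε * c * ru) ^ 2 + (u.2 - ε * s * ru) ^ 2) = 0 := by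
      rw [hp]
      linear_combination -h2u - ru ^ 2 * (c ^ 2 + s ^ 2) * hε2 - ru ^ 2 * hcs
    have hpv : 2 * ε * rv * p + (1 + (u.1 - ε * c * ru) ^ 2 + (u.2 - ε * s * ru) ^ 2) = 0 := by
      rw [hp, e1, e2]
      linear_combination -h2v - rv ^ 2 * (c ^ 2 + s ^ 2) * hε2 - rv ^ 2 * hcs
    have hpneg : ε * p < 0 := key u
    have hd : (ε * p) * (ru - rv) = 0 := by linarith
    have hr : ru = rv := by
      rcases mul_eq_zero.mp hd with h' | h'
      · exact absurd h' (ne_of_lt hpneg)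
      · linarith
    have hx1 : u.1 = v.1 := by rw [hr] at e1; linarith
    have hx2 : u.2 = v.2 := by rw [hr] at e2; linarith
    exact Prod.ext hx1 hx2
  · -- SurjOn
    intro x hx
    simp only [Set.mem_setOf_eq] at hx
    set p := x.1 * c + x.2 * s with hp
    have hppos : 0 < -(2 * ε * p) := by linarith
    set t := (1 + x.1 ^ 2 + x.2 ^ 2) / (-(2 * ε * p)) with ht
    have htpos : 0 < t := div_pos (by positivity) hppos
    have htt : 2 * ε * p * t = -(1 + x.1 ^ 2 + x.2 ^ 2) := by
      rw [ht, mul_div_assoc', div_eq_iff hppos.ne']; ring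
    refine ⟨(x.1 + ε * t * c, x.2 + ε * t * s), Set.mem_univ _, ?_⟩
    have hu : 1 + (x.1 + ε * t * c) ^ 2 + (x.2 + ε * t * s) ^ 2 = t ^ 2 := by
      linear_combination htt - 2 * ε * t * hp + t ^ 2 * (c ^ 2 + s ^ 2) * hε2 + t ^ 2 * hcs
    have hs : Real.sqrt (1 + (x.1 + ε * t * c) ^ 2 + (x.2 + ε * t * s) ^ 2) = t := by
      rw [hu, Real.sqrt_sq htpos.le]
    refine Prod.ext ?_ ?_ <;> simp only [hs] <;> ring

theorem stmt1 (α ε : ℝ) (hε : ε = 1 ∨ ε = -1) :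
    let F : ℝ × ℝ → ℝ × ℝ := fun u =>
      (u.1 - ε * Real.cos α * Real.sqrt (1 + u.1 ^ 2 + u.2 ^ 2),
       u.2 - ε * Real.sin α * Real.sqrt (1 + u.1 ^ 2 + u.2 ^ 2))
    Set.BijOn F Set.univ
      {x : ℝ × ℝ | ε * (x.1 * Real.cos α + x.2 * Real.sin α) < 0} := by
  intro F
  have hε2 : ε ^ 2 = 1 := by rcases hε with h | h <;> rw [h] <;> ring
  have hcs : Real.cos α ^ 2 + Real.sin α ^ 2 = 1 := Real.cos_sq_add_sin_sq α
  exact aux_bij (Real.cos α) (Real.sin α) ε hcs hε2
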